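/- Let f₁, f₂ be continuous probability densities on [0,1], positive on (0,1), with push-forward diffeomorphism y : (0,1) → (0,1) satisfying F₂(y(x)) = F₁(x). Suppose lim_{x→0⁺} y'(x) > 1 and lim_{x→1⁻} y'(x) > 1 (possibly +∞), and that f₁/f₂ has strictly positive second derivative on (0,1). Then y has exactly one fixed point x* in (0,1); moreover y(x) > x on (0, x*) and y(x) < x on (x*, 1), and f₁(x*) ≤ f₂(x*). -/

import Mathlib

open Set Filter MeasureTheory intervalIntegral

private lemma aux_ii {f : ℝ → ℝ} (hc : ContinuousOn f (Set.Icc 0 1))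
    {a b : ℝ} (ha : a ∈ Set.Icc (0:ℝ) 1) (hb : b ∈ Set.Icc (0:ℝ) 1) :
    IntervalIntegrable f MeasureTheory.volume a b :=
  (hc.mono (Set.uIcc_subset_Icc ha hb)).intervalIntegrable

private lemma aux_smono {f : ℝ → ℝ} (hc : ContinuousOn f (Set.Icc 0 1))
    (hpos : ∀ x ∈ Set.Ioo (0:ℝ) 1, 0 < f x) :
    StrictMonoOn (fun u => ∫ t in (0:ℝ)..u, f t) (Set.Icc 0 1) := by
  intro a ha b hb hab
  have h0 : (0:ℝ) ∈ Set.Icc (0:ℝ) 1 := ⟨le_refl 0, zero_le_one⟩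
  have h1 : (∫ t in (0:ℝ)..a, f t) + ∫ t in a..b, f t = ∫ t in (0:ℝ)..b, f t :=
    integral_add_adjacent_intervals (aux_ii hc h0 ha) (aux_ii hc ha hb)
  have h2 : 0 < ∫ t in a..b, f t :=
    intervalIntegral_pos_of_pos_on (aux_ii hc ha hb)
      (fun x hx => hpos x ⟨lt_of_le_of_lt ha.1 hx.1, lt_of_lt_of_le hx.2 hb.2⟩) hab
  simp only
  linarith

private lemma aux_ftc {f : ℝ → ℝ} (hc : ContinuousOn f (Set.Icc 0 1))
    {x : ℝ} (hx : x ∈ Set.Ioo (0:ℝ) 1) :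
    HasDerivAt (fun u => ∫ t in (0:ℝ)..u, f t) (f x) x := by
  have hca : ContinuousAt f x := hc.continuousAt (Icc_mem_nhds hx.1 hx.2)
  have hm : StronglyMeasurableAtFilter f (nhds x) MeasureTheory.volume :=
    ContinuousOn.stronglyMeasurableAtFilter isOpen_Ioo (hc.mono Set.Ioo_subset_Icc_self) x hx
  exact integral_hasDerivAt_right
    (aux_ii hc ⟨le_refl 0, zero_le_one⟩ ⟨hx.1.le, hx.2.le⟩) hm hca

private lemma aux_near0 (y : ℝ → ℝ)
    (hymaps : ∀ x ∈ Set.Ioo (0:ℝ) 1, y x ∈ Set.Ioo (0:ℝ) 1)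
    (hydiff : ∀ x ∈ Set.Ioo (0:ℝ) 1, DifferentiableAt ℝ y x)
    (hlim0 : (∃ L > 1, Filter.Tendsto (deriv y) (nhdsWithin 0 (Set.Ioi 0)) (nhds L)) ∨
        Filter.Tendsto (deriv y) (nhdsWithin 0 (Set.Ioi 0)) Filter.atTop) :
    ∃ δ : ℝ, 0 < δ ∧ δ ≤ 1 ∧ ∀ x ∈ Set.Ioo (0:ℝ) δ, x < y x := by
  obtain ⟨m, hm, hev⟩ : ∃ m : ℝ, 1 < m ∧ ∀ᶠ t in nhdsWithin 0 (Set.Ioi 0), m ≤ deriv y t := by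
    rcases hlim0 with ⟨L, hL, ht⟩ | ht
    · exact ⟨(1+L)/2, by linarith, ht.eventually (eventually_ge_nhds (by linarith))⟩
    · exact ⟨2, one_lt_two, ht.eventually_ge_atTop 2⟩
  obtain ⟨u, hu, hsub⟩ := mem_nhdsGT_iff_exists_Ioo_subset.mp hev
  refine ⟨min u 1, lt_min hu zero_lt_one, min_le_right _ _, ?_⟩
  intro x hx
  have hx1 : x ∈ Set.Ioo (0:ℝ) 1 := ⟨hx.1, lt_of_lt_of_le hx.2 (min_le_right _ _)⟩
  have hxu : x < u := lt_of_lt_of_le hx.2 (min_le_left _ _)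
  have hy0 : 0 < y x := (hymaps x hx1).1
  have key : ∀ a, 0 < a → a < x → m * (x - a) < y x := by
    intro a ha hax
    obtain ⟨c, hc, hceq⟩ := exists_deriv_eq_slope y hax
      (fun t ht => (hydiff t ⟨lt_of_lt_of_le ha ht.1,
        lt_of_le_of_lt ht.2 hx1.2⟩).continuousAt.continuousWithinAt)
      (fun t ht => (hydiff t ⟨lt_trans ha ht.1,
        lt_trans ht.2 hx1.2⟩).differentiableWithinAt)
    have hmc : m ≤ deriv y c := hsub ⟨lt_trans ha hc.1, lt_trans hc.2 hxu⟩
    rw [hceq] at hmc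
    have h1 : m * (x - a) ≤ y x - y a := (le_div_iff₀ (by linarith)).mp hmc
    have h2 : 0 < y a := (hymaps a ⟨ha, lt_trans hax hx1.2⟩).1
    linarith
  by_contra hcon
  push_neg at hcon
  have hm0 : (0:ℝ) < m := by linarith
  have hyx : y x < m * x := lt_of_le_of_lt hcon (by nlinarith [hx.1])
  have ha1 : y x / m < x := (div_lt_iff₀ hm0).mpr (by nlinarith)
  have ha0 : 0 < y x / m := div_pos hy0 hm0
  have hkey := key (x - y x / m) (by linarith) (by linarith)
  rw [sub_sub_cancel, mul_div_cancel₀ _ (ne_of_gt hm0)] at hkey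
  exact lt_irrefl _ hkey

private lemma aux_near1 (y : ℝ → ℝ)
    (hymaps : ∀ x ∈ Set.Ioo (0:ℝ) 1, y x ∈ Set.Ioo (0:ℝ) 1)
    (hydiff : ∀ x ∈ Set.Ioo (0:ℝ) 1, DifferentiableAt ℝ y x)
    (hlim1 : (∃ L > 1, Filter.Tendsto (deriv y) (nhdsWithin 1 (Set.Iio 1)) (nhds L)) ∨
        Filter.Tendsto (deriv y) (nhdsWithin 1 (Set.Iio 1)) Filter.atTop) :
    ∃ δ : ℝ, 0 < δ ∧ δ ≤ 1 ∧ ∀ x ∈ Set.Ioo (1 - δ) (1:ℝ), y x < x := by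
  obtain ⟨m, hm, hev⟩ : ∃ m : ℝ, 1 < m ∧ ∀ᶠ t in nhdsWithin 1 (Set.Iio 1), m ≤ deriv y t := by
    rcases hlim1 with ⟨L, hL, ht⟩ | ht
    · exact ⟨(1+L)/2, by linarith, ht.eventually (eventually_ge_nhds (by linarith))⟩
    · exact ⟨2, one_lt_two, ht.eventually_ge_atTop 2⟩
  obtain ⟨l, hl, hsub⟩ := mem_nhdsLT_iff_exists_Ioo_subset.mp hev
  refine ⟨min (1 - l) 1, lt_min (by simpa using hl) zero_lt_one, min_le_right _ _, ?_⟩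
  intro x hx
  have hx0 : (0:ℝ) ≤ 1 - min (1-l) 1 := by
    have := min_le_right (1-l) 1; linarith
  have hx1 : x ∈ Set.Ioo (0:ℝ) 1 := ⟨lt_of_le_of_lt hx0 hx.1, hx.2⟩
  have hxl : l < x := by
    have := min_le_left (1-l) 1; have := hx.1; linarith
  have hy1 : y x < 1 := (hymaps x hx1).2
  have key : ∀ b, x < b → b < 1 → m * (b - x) < 1 - y x := by
    intro b hxb hb1
    obtain ⟨c, hc, hceq⟩ := exists_deriv_eq_slope y hxb
      (fun t ht => (hydiff t ⟨lt_of_lt_of_le hx1.1 ht.1,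
        lt_of_le_of_lt ht.2 hb1⟩).continuousAt.continuousWithinAt)
      (fun t ht => (hydiff t ⟨lt_trans hx1.1 ht.1,
        lt_trans ht.2 hb1⟩).differentiableWithinAt)
    have hmc : m ≤ deriv y c := hsub ⟨lt_trans hxl hc.1, lt_trans hc.2 hb1⟩
    rw [hceq] at hmc
    have h1 : m * (b - x) ≤ y b - y x := (le_div_iff₀ (by linarith)).mp hmc
    have h2 : y b < 1 := (hymaps b ⟨lt_trans hx1.1 hxb, hb1⟩).2
    linarith
  by_contra hcon
  push_neg at hcon
  have hm0 : (0:ℝ) < m := by linarith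
  have h1y : 0 < 1 - y x := by linarith
  have hxy : 1 - y x < m * (1 - x) := by nlinarith [hx.2]
  have hb1 : (1 - y x)/m < 1 - x := (div_lt_iff₀ hm0).mpr (by nlinarith)
  have hb0 : 0 < (1 - y x)/m := div_pos h1y hm0
  have hkey := key (x + (1 - y x) / m) (by linarith) (by linarith)
  rw [add_sub_cancel_left, mul_div_cancel₀ _ (ne_of_gt hm0)] at hkey
  exact lt_irrefl _ hkey

/-- If the push-forward map y of two smooth densities has derivative limits greater than 1
(possibly ∞) at both endpoints and f₁/f₂ has strictly positive second derivative, then y has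
a unique interior fixed point x*, with y > id before it and y < id after it, and
f₁(x*) ≤ f₂(x*). -/
theorem stmt_14 (f₁ f₂ : ℝ → ℝ)
    (h₁c : ContinuousOn f₁ (Set.Icc 0 1)) (h₂c : ContinuousOn f₂ (Set.Icc 0 1))
    (h₁pos : ∀ x ∈ Set.Ioo (0:ℝ) 1, 0 < f₁ x)
    (h₂pos : ∀ x ∈ Set.Ioo (0:ℝ) 1, 0 < f₂ x)
    (h₁1 : ∫ x in (0:ℝ)..1, f₁ x = 1) (h₂1 : ∫ x in (0:ℝ)..1, f₂ x = 1)
    (y : ℝ → ℝ)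
    (hymaps : ∀ x ∈ Set.Ioo (0:ℝ) 1, y x ∈ Set.Ioo (0:ℝ) 1)
    (hymono : StrictMonoOn y (Set.Ioo (0:ℝ) 1))
    (hydiff : ∀ x ∈ Set.Ioo (0:ℝ) 1, DifferentiableAt ℝ y x)
    (hypush : ∀ x ∈ Set.Ioo (0:ℝ) 1,
        (∫ t in (0:ℝ)..(y x), f₂ t) = ∫ t in (0:ℝ)..x, f₁ t)
    (hyderiv : ∀ x ∈ Set.Ioo (0:ℝ) 1, deriv y x = f₁ x / f₂ (y x))
    (hlim0 : (∃ L > 1, Filter.Tendsto (deriv y) (nhdsWithin 0 (Set.Ioi 0)) (nhds L)) ∨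
        Filter.Tendsto (deriv y) (nhdsWithin 0 (Set.Ioi 0)) Filter.atTop)
    (hlim1 : (∃ L > 1, Filter.Tendsto (deriv y) (nhdsWithin 1 (Set.Iio 1)) (nhds L)) ∨
        Filter.Tendsto (deriv y) (nhdsWithin 1 (Set.Iio 1)) Filter.atTop)
    (hratio : ∀ x ∈ Set.Ioo (0:ℝ) 1,
        0 < deriv (deriv (fun u => f₁ u / f₂ u)) x) :
    ∃ xstar ∈ Set.Ioo (0:ℝ) 1, y xstar = xstar ∧
      (∀ x ∈ Set.Ioo (0:ℝ) 1, y x = x → x = xstar) ∧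
      (∀ x ∈ Set.Ioo (0:ℝ) xstar, y x > x) ∧
      (∀ x ∈ Set.Ioo xstar (1:ℝ), y x < x) ∧
      f₁ xstar ≤ f₂ xstar := by
  -- the difference of c.d.f.s
  set h : ℝ → ℝ := fun u => (∫ t in (0:ℝ)..u, f₁ t) - ∫ t in (0:ℝ)..u, f₂ t with hdef
  have hder : ∀ x ∈ Set.Ioo (0:ℝ) 1, HasDerivAt h (f₁ x - f₂ x) x :=
    fun x hx => (aux_ftc h₁c hx).sub (aux_ftc h₂c hx)
  have Fsm := aux_smono h₂c h₂pos
  have heq : ∀ x ∈ Set.Ioo (0:ℝ) 1,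
      h x = (∫ t in (0:ℝ)..(y x), f₂ t) - ∫ t in (0:ℝ)..x, f₂ t := by
    intro x hx; rw [hdef]; simp only [hypush x hx]
  have hIcc : ∀ {x : ℝ}, x ∈ Set.Ioo (0:ℝ) 1 → x ∈ Set.Icc (0:ℝ) 1 :=
    fun hx => ⟨hx.1.le, hx.2.le⟩
  have hx_gt : ∀ x ∈ Set.Ioo (0:ℝ) 1, (0 < h x ↔ x < y x) := by
    intro x hx
    rw [heq x hx, sub_pos]
    exact ⟨fun hlt => (Fsm.lt_iff_lt (hIcc hx) (hIcc (hymaps x hx))).mp hlt,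
      fun hlt => Fsm (hIcc hx) (hIcc (hymaps x hx)) hlt⟩
  have hx_lt : ∀ x ∈ Set.Ioo (0:ℝ) 1, (h x < 0 ↔ y x < x) := by
    intro x hx
    rw [heq x hx, sub_neg]
    exact ⟨fun hlt => (Fsm.lt_iff_lt (hIcc (hymaps x hx)) (hIcc hx)).mp hlt,
      fun hlt => Fsm (hIcc (hymaps x hx)) (hIcc hx) hlt⟩
  -- behaviour near the endpoints
  obtain ⟨δ0, hδ0, hδ01, hnear0⟩ := aux_near0 y hymaps hydiff hlim0
  obtain ⟨δ1, hδ1, hδ11, hnear1⟩ := aux_near1 y hymaps hydiff hlim1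
  -- convexity of the ratio
  have rc : StrictConvexOn ℝ (Set.Ioo (0:ℝ) 1) (fun u => f₁ u / f₂ u) := by
    apply strictConvexOn_of_deriv2_pos (convex_Ioo 0 1)
      ((h₁c.mono Set.Ioo_subset_Icc_self).div (h₂c.mono Set.Ioo_subset_Icc_self)
        (fun x hx => (h₂pos x hx).ne'))
    intro x hx
    rw [interior_Ioo] at hx
    have hr2 : 0 < deriv (deriv (f₁ / f₂)) x := hratio x hx
    simpa [Function.iterate_succ, Function.iterate_one] using hr2
  have hkey : ∀ c₁ c₂ c₃ : ℝ, c₁ ∈ Set.Ioo (0:ℝ) 1 → c₂ ∈ Set.Ioo (0:ℝ) 1 →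
      c₃ ∈ Set.Ioo (0:ℝ) 1 → c₁ < c₂ → c₂ < c₃ →
      f₁ c₁ ≤ f₂ c₁ → f₂ c₂ ≤ f₁ c₂ → f₁ c₃ ≤ f₂ c₃ → False := by
    intro c₁ c₂ c₃ h1 h2 h3 h12 h23 hs1 hs2 hs3
    have h13 : c₁ < c₃ := lt_trans h12 h23
    have hlt := rc.lt_on_openSegment h1 h3 (ne_of_lt h13)
      (by rw [openSegment_eq_Ioo h13]; exact ⟨h12, h23⟩)
    have e1 : f₁ c₁ / f₂ c₁ ≤ 1 := div_le_one_of_le₀ hs1 (h₂pos c₁ h1).le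
    have e3 : f₁ c₃ / f₂ c₃ ≤ 1 := div_le_one_of_le₀ hs3 (h₂pos c₃ h3).le
    have e2 : 1 ≤ f₁ c₂ / f₂ c₂ := (one_le_div (h₂pos c₂ h2)).mpr hs2
    have := lt_of_lt_of_le hlt (max_le e1 e3)
    linarith
  -- mean value theorem for h
  have hmvt : ∀ p q : ℝ, p ∈ Set.Ioo (0:ℝ) 1 → q ∈ Set.Ioo (0:ℝ) 1 → p < q →
      ∃ c ∈ Set.Ioo p q, f₁ c - f₂ c = (h q - h p) / (q - p) := by
    intro p q hp hq hpq
    have hmem : ∀ t ∈ Set.Ioo p q, t ∈ Set.Ioo (0:ℝ) 1 :=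
      fun t ht => ⟨lt_trans hp.1 ht.1, lt_trans ht.2 hq.2⟩
    have hmem' : ∀ t ∈ Set.Icc p q, t ∈ Set.Ioo (0:ℝ) 1 :=
      fun t ht => ⟨lt_of_lt_of_le hp.1 ht.1, lt_of_le_of_lt ht.2 hq.2⟩
    exact exists_hasDerivAt_eq_slope h (fun u => f₁ u - f₂ u) hpq
      (fun t ht => ((hder t (hmem' t ht)).differentiableAt).continuousAt.continuousWithinAt)
      (fun t ht => hder t (hmem t ht))
  -- find the fixed point by the intermediate value theorem
  set x₀ : ℝ := δ0 / 2 with hx₀def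
  have hx₀δ : x₀ ∈ Set.Ioo (0:ℝ) δ0 := ⟨by linarith, by linarith⟩
  have hx₀I : x₀ ∈ Set.Ioo (0:ℝ) 1 := ⟨hx₀δ.1, lt_of_lt_of_le hx₀δ.2 hδ01⟩
  set x₁ : ℝ := max (1 - δ1/2) ((x₀ + 1)/2) with hx₁def
  have hx₁1 : x₁ < 1 := max_lt (by linarith) (by linarith [hx₀I.2])
  have hx₁δ : 1 - δ1 < x₁ := lt_of_lt_of_le (by linarith) (le_max_left _ _)
  have hx₀₁ : x₀ < x₁ := lt_of_lt_of_le (by linarith [hx₀I.2]) (le_max_right _ _)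
  have hx₁I : x₁ ∈ Set.Ioo (0:ℝ) 1 := ⟨lt_trans hx₀I.1 hx₀₁, hx₁1⟩
  have hgy0 : x₀ < y x₀ := hnear0 x₀ hx₀δ
  have hgy1 : y x₁ < x₁ := hnear1 x₁ ⟨hx₁δ, hx₁1⟩
  have hgc : ContinuousOn (fun u => y u - u) (Set.Icc x₀ x₁) := by
    intro t ht
    have htI : t ∈ Set.Ioo (0:ℝ) 1 :=
      ⟨lt_of_lt_of_le hx₀I.1 ht.1, lt_of_le_of_lt ht.2 hx₁1⟩
    exact ((hydiff t htI).continuousAt.sub continuousAt_id).continuousWithinAt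
  obtain ⟨xstar, hxstarm, hxstar⟩ : ∃ xs ∈ Set.Icc x₀ x₁, y xs - xs = 0 := by
    have := intermediate_value_Icc' (le_of_lt hx₀₁) hgc
    have h0m : (0:ℝ) ∈ Set.Icc (y x₁ - x₁) (y x₀ - x₀) := ⟨by linarith, by linarith⟩
    obtain ⟨xs, hxs, hxs0⟩ := this h0m
    exact ⟨xs, hxs, hxs0⟩
  have hstarI : xstar ∈ Set.Ioo (0:ℝ) 1 :=
    ⟨lt_of_lt_of_le hx₀I.1 hxstarm.1, lt_of_le_of_lt hxstarm.2 hx₁1⟩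
  have hyfix : y xstar = xstar := by linarith [hxstar]
  have hstar0 : h xstar = 0 := by
    rw [heq xstar hstarI, hyfix]; ring
  -- a point beyond any given interior point where h is negative
  have hzpt : ∀ x ∈ Set.Ioo (0:ℝ) 1, ∃ z, x < z ∧ z ∈ Set.Ioo (0:ℝ) 1 ∧ h z < 0 := by
    intro x hx
    refine ⟨max (1 - δ1/2) ((x + 1)/2), lt_of_lt_of_le (by linarith [hx.2]) (le_max_right _ _),
      ⟨lt_trans hx.1 (lt_of_lt_of_le (by linarith [hx.2]) (le_max_right _ _)), ?_⟩, ?_⟩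
    · exact max_lt (by linarith) (by linarith [hx.2])
    · have hzI : max (1 - δ1/2) ((x + 1)/2) ∈ Set.Ioo (0:ℝ) 1 :=
        ⟨lt_trans hx.1 (lt_of_lt_of_le (by linarith [hx.2]) (le_max_right _ _)),
          max_lt (by linarith) (by linarith [hx.2])⟩
      have : y (max (1 - δ1/2) ((x + 1)/2)) < max (1 - δ1/2) ((x + 1)/2) :=
        hnear1 _ ⟨lt_of_lt_of_le (by linarith) (le_max_left _ _), hzI.2⟩
      exact (hx_lt _ hzI).mpr this
  -- a point before any given interior point where h is positive
  have hwpt : ∀ x ∈ Set.Ioo (0:ℝ) 1, ∃ w, 0 < w ∧ w < x ∧ 0 < h w := by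
    intro x hx
    have hmin : 0 < min δ0 x := lt_min hδ0 hx.1
    refine ⟨min δ0 x / 2, by linarith, by linarith [min_le_right δ0 x], ?_⟩
    have hwδ : min δ0 x / 2 ∈ Set.Ioo (0:ℝ) δ0 := ⟨by linarith, by linarith [min_le_left δ0 x]⟩
    have hwI : min δ0 x / 2 ∈ Set.Ioo (0:ℝ) 1 :=
      ⟨hwδ.1, by linarith [min_le_right δ0 x, hx.2]⟩
    exact (hx_gt _ hwI).mpr (hnear0 _ hwδ)
  -- h is positive before xstar
  have goalA : ∀ x ∈ Set.Ioo (0:ℝ) xstar, x < y x := by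
    intro x hx
    have hxI : x ∈ Set.Ioo (0:ℝ) 1 := ⟨hx.1, lt_trans hx.2 hstarI.2⟩
    by_contra hcon
    have hhx : h x ≤ 0 := by
      rcases lt_or_eq_of_le (not_lt.mp hcon) with hlt | heq'
      · exact le_of_lt ((hx_lt x hxI).mpr hlt)
      · rw [heq x hxI, heq']; simp
    obtain ⟨w, hw0, hwx, hhw⟩ := hwpt x hxI
    obtain ⟨z, hzgt, hzI, hhz⟩ := hzpt xstar hstarI
    have hwI : w ∈ Set.Ioo (0:ℝ) 1 := ⟨hw0, lt_trans (lt_trans hwx hx.2) hstarI.2⟩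
    obtain ⟨c₁, hc₁m, hc₁⟩ := hmvt w x hwI hxI hwx
    obtain ⟨c₂, hc₂m, hc₂⟩ := hmvt x xstar hxI hstarI hx.2
    obtain ⟨c₃, hc₃m, hc₃⟩ := hmvt xstar z hstarI hzI hzgt
    have hs1 : f₁ c₁ ≤ f₂ c₁ := by
      have : (h x - h w) / (x - w) < 0 :=
        div_neg_of_neg_of_pos (by linarith) (by linarith)
      linarith [hc₁, this]
    have hs2 : f₂ c₂ ≤ f₁ c₂ := by
      have : 0 ≤ (h xstar - h x) / (xstar - x) :=
        div_nonneg (by linarith [hstar0]) (by linarith [hx.2])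
      linarith [hc₂, this]
    have hs3 : f₁ c₃ ≤ f₂ c₃ := by
      have : (h z - h xstar) / (z - xstar) < 0 :=
        div_neg_of_neg_of_pos (by linarith [hstar0]) (by linarith)
      linarith [hc₃, this]
    exact hkey c₁ c₂ c₃ ⟨lt_trans hw0 hc₁m.1, lt_trans hc₁m.2 (lt_trans hx.2 hstarI.2)⟩
      ⟨lt_trans hxI.1 hc₂m.1, lt_trans hc₂m.2 hstarI.2⟩
      ⟨lt_trans hstarI.1 hc₃m.1, lt_trans hc₃m.2 hzI.2⟩
      (lt_trans hc₁m.2 hc₂m.1) (lt_trans hc₂m.2 hc₃m.1) hs1 hs2 hs3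
  -- h is negative after xstar
  have goalB : ∀ x ∈ Set.Ioo xstar (1:ℝ), y x < x := by
    intro x hx
    have hxI : x ∈ Set.Ioo (0:ℝ) 1 := ⟨lt_trans hstarI.1 hx.1, hx.2⟩
    by_contra hcon
    have hhx : 0 ≤ h x := by
      rcases lt_or_eq_of_le (not_lt.mp hcon) with hlt | heq'
      · exact le_of_lt ((hx_gt x hxI).mpr hlt)
      · rw [heq x hxI, ← heq']; simp
    obtain ⟨w, hw0, hwx, hhw⟩ := hwpt xstar hstarI
    obtain ⟨z, hzgt, hzI, hhz⟩ := hzpt x hxI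
    have hwI : w ∈ Set.Ioo (0:ℝ) 1 := ⟨hw0, lt_trans hwx hstarI.2⟩
    obtain ⟨c₁, hc₁m, hc₁⟩ := hmvt w xstar hwI hstarI hwx
    obtain ⟨c₂, hc₂m, hc₂⟩ := hmvt xstar x hstarI hxI hx.1
    obtain ⟨c₃, hc₃m, hc₃⟩ := hmvt x z hxI hzI hzgt
    have hs1 : f₁ c₁ ≤ f₂ c₁ := by
      have : (h xstar - h w) / (xstar - w) < 0 :=
        div_neg_of_neg_of_pos (by linarith [hstar0]) (by linarith)
      linarith [hc₁, this]
    have hs2 : f₂ c₂ ≤ f₁ c₂ := by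
      have : 0 ≤ (h x - h xstar) / (x - xstar) :=
        div_nonneg (by linarith [hstar0]) (by linarith [hx.1])
      linarith [hc₂, this]
    have hs3 : f₁ c₃ ≤ f₂ c₃ := by
      have : (h z - h x) / (z - x) < 0 :=
        div_neg_of_neg_of_pos (by linarith) (by linarith)
      linarith [hc₃, this]
    exact hkey c₁ c₂ c₃ ⟨lt_trans hw0 hc₁m.1, lt_trans hc₁m.2 hstarI.2⟩
      ⟨lt_trans hstarI.1 hc₂m.1, lt_trans hc₂m.2 hxI.2⟩
      ⟨lt_trans hxI.1 hc₃m.1, lt_trans hc₃m.2 hzI.2⟩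
      (lt_trans hc₁m.2 hc₂m.1) (lt_trans hc₂m.2 hc₃m.1) hs1 hs2 hs3
  -- final inequality on densities
  have goalC : f₁ xstar ≤ f₂ xstar := by
    by_contra hcon
    push_neg at hcon
    have hd := hder xstar hstarI
    have hslope := hasDerivAt_iff_tendsto_slope.mp hd
    have hev : ∀ᶠ z in nhdsWithin xstar {xstar}ᶜ, 0 < slope h xstar z :=
      hslope.eventually (eventually_gt_nhds (by linarith))
    have hev2 : ∀ᶠ z in nhdsWithin xstar (Set.Ioi xstar), 0 < slope h xstar z :=
      hev.filter_mono (nhdsWithin_mono _ (fun z hz => ne_of_gt hz))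
    have hev3 : ∀ᶠ z in nhdsWithin xstar (Set.Ioi xstar), z ∈ Set.Ioo xstar 1 :=
      Filter.eventually_of_mem (Ioo_mem_nhdsGT_of_mem ⟨le_refl _, hstarI.2⟩) (fun z hz => hz)
    obtain ⟨z, hz1, hz2⟩ := (hev2.and hev3).exists
    have hzI : z ∈ Set.Ioo (0:ℝ) 1 := ⟨lt_trans hstarI.1 hz2.1, hz2.2⟩
    have hslz : slope h xstar z = h z / (z - xstar) := by
      rw [slope_def_field, hstar0]; ring_nf
    have hhz : 0 < h z := by
      rw [hslz] at hz1
      by_contra hhz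
      push_neg at hhz
      have : h z / (z - xstar) ≤ 0 := div_nonpos_of_nonpos_of_nonneg hhz (by linarith [hz2.1])
      linarith
    exact absurd ((hx_lt z hzI).mpr (goalB z hz2)) (by linarith)
  refine ⟨xstar, hstarI, hyfix, ?_, goalA, goalB, goalC⟩
  intro x hxI hfx
  rcases lt_trichotomy x xstar with hlt | heq' | hgt
  · exact absurd (goalA x ⟨hxI.1, hlt⟩) (by rw [hfx]; exact lt_irrefl x)
  · exact heq'
  · exact absurd (goalB x ⟨hgt, hxI.2⟩) (by rw [hfx]; exact lt_irrefl x)
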